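/- Let n ≥ 3 be odd and let S² be the unit sphere in ℝ³. The action of the dihedral group D_n on the cyclic configuration space G(S²,n) by permutation of coordinates is free if and only if n is prime. -/

import Mathlib

noncomputable def vv (t : ℝ) : EuclideanSpace ℝ (Fin 3) :=
  (WithLp.equiv 2 (Fin 3 → ℝ)).symm ![(Real.sqrt (1 + t ^ 2))⁻¹, (Real.sqrt (1 + t ^ 2))⁻¹ * t, 0]

lemma vv_sqrt_pos (t : ℝ) : 0 < Real.sqrt (1 + t ^ 2) :=
  Real.sqrt_pos.2 (by positivity)

lemma vv_norm (t : ℝ) : ‖vv t‖ = 1 := by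
  have h : (0:ℝ) < 1 + t ^ 2 := by positivity
  rw [EuclideanSpace.norm_eq]
  simp only [vv, WithLp.equiv_symm_apply, PiLp.toLp_apply, WithLp.ofLp_toLp]
  rw [Fin.sum_univ_three]
  simp only [Matrix.cons_val_zero, Matrix.cons_val_one, Matrix.head_cons, Matrix.cons_val_two,
    Matrix.tail_cons, Real.norm_eq_abs, sq_abs]
  have hs : (Real.sqrt (1 + t ^ 2))⁻¹ ^ 2 = (1 + t ^ 2)⁻¹ := by
    rw [inv_pow, Real.sq_sqrt h.le]
  have : (Real.sqrt (1 + t ^ 2))⁻¹ ^ 2 + ((Real.sqrt (1 + t ^ 2))⁻¹ * t) ^ 2 + (0:ℝ) ^ 2 = 1 := by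
    rw [mul_pow, hs]
    field_simp
    norm_num
  rw [this, Real.sqrt_one]

lemma vv_inj : Function.Injective vv := by
  intro s t h
  have h0 : (Real.sqrt (1 + s ^ 2))⁻¹ = (Real.sqrt (1 + t ^ 2))⁻¹ := congrFun (congrArg WithLp.ofLp h) 0
  have h1 : (Real.sqrt (1 + s ^ 2))⁻¹ * s = (Real.sqrt (1 + t ^ 2))⁻¹ * t := congrFun (congrArg WithLp.ofLp h) 1
  have hne : (Real.sqrt (1 + t ^ 2))⁻¹ ≠ 0 := by
    exact inv_ne_zero (vv_sqrt_pos t).ne'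
  rw [h0] at h1
  exact mul_left_cancel₀ hne h1

/-- For odd `n ≥ 3`, the action of the dihedral group `Dₙ` on the cyclic
configuration space `G(S²,n)` of the unit sphere in `ℝ³` by permutation of coordinates
(`(τ • x) i = x (τ⁻¹ i)`, where the rotation `r a` acts on `ZMod n` by `i ↦ i + a` and the
reflection `sr a` by `i ↦ a - i`) is free if and only if `n` is prime. -/
theorem stmt4 (n : ℕ) (hn : 3 ≤ n) (hodd : Odd n)
    (G : Set (ZMod n → EuclideanSpace ℝ (Fin 3)))
    (hG : G = {x | (∀ i, ‖x i‖ = 1) ∧ ∀ i : ZMod n, x i ≠ x (i + 1)})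
    (act : DihedralGroup n → (ZMod n → EuclideanSpace ℝ (Fin 3)) →
      (ZMod n → EuclideanSpace ℝ (Fin 3)))
    (hr : ∀ a x i, act (DihedralGroup.r a) x i = x (i - a))
    (hsr : ∀ a x i, act (DihedralGroup.sr a) x i = x (a - i)) :
    (∀ g : DihedralGroup n, (∃ x ∈ G, act g x = x) → g = 1) ↔ n.Prime := by
  haveI : NeZero n := ⟨by omega⟩
  constructor
  · -- free ⇒ prime
    intro hfree
    by_contra hnp
    obtain ⟨d, hdvd, hd2, hdn⟩ := Nat.exists_dvd_of_not_prime2 (by omega) hnp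
    haveI : Fact (1 < d) := ⟨hd2⟩
    haveI : NeZero d := ⟨by omega⟩
    set f : ZMod n →+* ZMod d := ZMod.castHom hdvd (ZMod d) with hf
    set x : ZMod n → EuclideanSpace ℝ (Fin 3) := fun i => vv ((f i).val : ℝ) with hx
    have hxG : x ∈ G := by
      rw [hG]
      refine ⟨fun i => vv_norm _, fun i hcontra => ?_⟩
      have hval : ((f i).val : ℝ) = ((f (i + 1)).val : ℝ) := vv_inj hcontra
      have hval2 : (f i).val = (f (i + 1)).val := Nat.cast_injective hval
      have : f i = f (i + 1) := ZMod.val_injective _ hval2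
      rw [map_add, map_one, left_eq_add] at this
      exact one_ne_zero this
    have hfix : act (DihedralGroup.r (d : ZMod n)) x = x := by
      funext i
      rw [hr]
      show vv ((f (i - (d : ZMod n))).val : ℝ) = vv ((f i).val : ℝ)
      rw [map_sub, map_natCast, ZMod.natCast_self, sub_zero]
    have h1 := hfree _ ⟨x, hxG, hfix⟩
    rw [DihedralGroup.one_def, DihedralGroup.r.injEq] at h1
    have : n ∣ d := (ZMod.natCast_eq_zero_iff d n).1 h1
    have := Nat.le_of_dvd (by omega) this
    omega
  · -- prime ⇒ free
    intro hp
    haveI : Fact n.Prime := ⟨hp⟩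
    rintro g ⟨x, hxG, hfix⟩
    rw [hG] at hxG
    obtain ⟨-, hx2⟩ := hxG
    cases g with
    | r a =>
      have key : ∀ j, x j = x (j + a) := by
        intro j
        have := congrFun hfix (j + a)
        rw [hr, add_sub_cancel_right] at this
        exact this
      by_cases ha : a = 0
      · rw [ha, DihedralGroup.one_def]
      · exfalso
        have iter : ∀ (k : ℕ) (j), x j = x (j + (k : ZMod n) * a) := by
          intro k
          induction k with
          | zero => simp
          | succ m ih =>
            intro j
            rw [ih j, key (j + (m : ZMod n) * a)]
            push_cast
            ring_nf
        have hconst : ∀ i j : ZMod n, x j = x i := by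
          intro i j
          have := iter ((i - j) / a).val j
          rwa [ZMod.natCast_val, ZMod.cast_id, div_mul_cancel₀ _ ha,
            add_sub_cancel] at this
        exact hx2 0 (hconst (0 + 1) 0)
    | sr a =>
      exfalso
      have h2 : (2 : ZMod n) ≠ 0 := by
        intro h
        have hdvd : (n : ℕ) ∣ 2 := (ZMod.natCast_eq_zero_iff 2 n).1 (by exact_mod_cast h)
        have := Nat.le_of_dvd (by norm_num) hdvd
        omega
      set j : ZMod n := (a - 1) / 2 with hj
      have hj2 : 2 * j = a - 1 := by
        rw [hj, mul_div_cancel₀ _ h2]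
      have haj : a - j = j + 1 := by
        have : a = 2 * j + 1 := by rw [hj2]; ring
        rw [this]; ring
      have := congrFun hfix j
      rw [hsr, haj] at this
      exact hx2 j this.symm
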